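/- arXiv:1907.02103 — 2 statements merged into one kernel-verified Lean document; each statement's English description precedes it below -/
import Mathlib

section
/- For each c > 0 define the sequence F(c,n)(x) := e^{-cx} · T_n(x) on [0,1], where (T_n) is the typewriter sequence. Let J ⊂ ℕ₀^N \ {0} be finite, α_j ∈ ℝ \ {0} for j ∈ J, and c ∈ (0,∞)^N with coordinates in a ℚ-linearly independent set. Then the sequence F_n := Σ_{j∈J} α_j F(c₁,n)^{j₁}···F(c_N,n)^{j_N} equals (Σ_{j∈J} α_j e^{-(c·j)x}) · T_n(x), converges to 0 in Lebesgue measure on [0,1], but does not converge to 0 almost everywhere on [0,1]. -/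
open Filter Set MeasureTheory

/-- Algebraic combinations of the sequences F(c,n)(x) = e^{-cx} T_n(x) built from
the typewriter sequence: they equal (Σ_j α_j e^{-(c·j)x}) T_n(x), converge to 0
in Lebesgue measure on [0,1], but do not converge to 0 a.e. on [0,1]. -/
theorem typewriter_algebra_combination
    (T : ℕ → ℝ → ℝ)
    (hT : ∀ k j : ℕ, j < 2 ^ k →
      T (2 ^ k + j) =
        Set.indicator (Set.Icc ((j : ℝ) * ((2 : ℝ) ^ k)⁻¹) (((j : ℝ) + 1) * ((2 : ℝ) ^ k)⁻¹)) 1)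
    (H : Set ℝ) (hH : H ⊆ Set.Ioi (0 : ℝ))
    (hind : LinearIndependent ℚ (fun h : H => (h : ℝ)))
    (N : ℕ) (c : Fin N → ℝ) (hc : ∀ i, c i ∈ H) (hcinj : Function.Injective c)
    (J : Finset (Fin N → ℕ)) (hJne : J.Nonempty) (hJ0 : ∀ j ∈ J, j ≠ 0)
    (α : (Fin N → ℕ) → ℝ) (hα : ∀ j ∈ J, α j ≠ 0)
    (F : ℕ → ℝ → ℝ)
    (hF : ∀ n x, F n x =
      ∑ j ∈ J, α j * ∏ i, (Real.exp (-(c i) * x) * T n x) ^ (j i)) :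
    (∀ n ≥ 1, ∀ x : ℝ,
        F n x = (∑ j ∈ J, α j * Real.exp (-(∑ i, c i * (j i : ℝ)) * x)) * T n x) ∧
    (∀ ε > (0 : ℝ),
        Tendsto (fun n => volume {x : ℝ | x ∈ Set.Icc (0 : ℝ) 1 ∧ ε < |F n x|})
          atTop (nhds 0)) ∧
    ¬ (∀ᵐ x ∂(volume.restrict (Set.Icc (0 : ℝ) 1)),
        Tendsto (fun n => F n x) atTop (nhds 0)) := by
  classical
  set g : ℝ → ℝ := fun x => ∑ j ∈ J, α j * Real.exp (-(∑ i, c i * (j i : ℝ)) * x) with hg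
  -- decomposition of n ≥ 1 as 2^k + j
  have hdec : ∀ n : ℕ, 1 ≤ n →
      n - 2 ^ (Nat.log 2 n) < 2 ^ (Nat.log 2 n) ∧
      n = 2 ^ (Nat.log 2 n) + (n - 2 ^ (Nat.log 2 n)) := by
    intro n hn
    have h1 : 2 ^ (Nat.log 2 n) ≤ n := Nat.pow_log_le_self 2 (by omega)
    have h2 : n < 2 ^ (Nat.log 2 n + 1) := Nat.lt_pow_succ_log_self (by norm_num) n
    rw [pow_succ] at h2
    omega
  -- T n takes values 0 and 1
  have hTval : ∀ n : ℕ, 1 ≤ n → ∀ x : ℝ, T n x = 0 ∨ T n x = 1 := by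
    intro n hn x
    obtain ⟨hlt, hrep⟩ := hdec n hn
    rw [hrep, hT _ _ hlt]
    by_cases hx : x ∈ Set.Icc (((n - 2 ^ (Nat.log 2 n) : ℕ) : ℝ) * ((2:ℝ) ^ (Nat.log 2 n))⁻¹)
        ((((n - 2 ^ (Nat.log 2 n) : ℕ) : ℝ) + 1) * ((2:ℝ) ^ (Nat.log 2 n))⁻¹)
    · right; rw [Set.indicator_of_mem hx]; rfl
    · left; rw [Set.indicator_of_notMem hx]
  -- the key algebraic formula
  have hformula : ∀ n ≥ 1, ∀ x : ℝ, F n x = g x * T n x := by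
    intro n hn x
    rw [hF, hg, Finset.sum_mul]
    refine Finset.sum_congr rfl fun j hj => ?_
    rcases hTval n hn x with h0 | h1
    · rw [h0, mul_zero]
      obtain ⟨i0, hi0⟩ := Function.ne_iff.mp (hJ0 j hj)
      rw [Finset.prod_eq_zero (Finset.mem_univ i0)
        (by rw [mul_zero]; exact zero_pow hi0), mul_zero]
    · rw [h1, mul_one]
      congr 1
      calc ∏ i, (Real.exp (-c i * x) * 1) ^ (j i)
          = ∏ i, Real.exp ((j i : ℝ) * (-c i * x)) := by
            refine Finset.prod_congr rfl fun i _ => ?_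
            rw [mul_one, Real.exp_nat_mul]
        _ = Real.exp (∑ i, (j i : ℝ) * (-c i * x)) := (Real.exp_sum _ _).symm
        _ = Real.exp (-(∑ i, c i * (j i : ℝ)) * x) := by
            congr 1
            rw [neg_mul, Finset.sum_mul, ← Finset.sum_neg_distrib]
            exact Finset.sum_congr rfl fun i _ => by ring
  -- bound on the support of T n
  have hTsupp : ∀ n : ℕ, 1 ≤ n →
      volume {x : ℝ | T n x ≠ 0} ≤ ENNReal.ofReal ((2:ℝ) ^ (Nat.log 2 n))⁻¹ := by
    intro n hn
    obtain ⟨hlt, hrep⟩ := hdec n hn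
    set k := Nat.log 2 n
    set j := n - 2 ^ k
    have hsub : {x : ℝ | T n x ≠ 0} ⊆
        Set.Icc ((j : ℝ) * ((2:ℝ) ^ k)⁻¹) (((j : ℝ) + 1) * ((2:ℝ) ^ k)⁻¹) := by
      intro x hx
      by_contra hxm
      apply hx
      rw [hrep, hT _ _ hlt, Set.indicator_of_notMem hxm]
    calc volume {x : ℝ | T n x ≠ 0}
        ≤ volume (Set.Icc ((j : ℝ) * ((2:ℝ) ^ k)⁻¹) (((j : ℝ) + 1) * ((2:ℝ) ^ k)⁻¹)) :=
          measure_mono hsub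
      _ = ENNReal.ofReal ((2:ℝ) ^ k)⁻¹ := by rw [Real.volume_Icc]; congr 1; ring
  have two_pow_pos : ∀ k : ℕ, (0:ℝ) < 2 ^ k := fun k => by positivity
  -- part 1
  refine ⟨hformula, ?_, ?_⟩
  · -- convergence in measure
    intro ε hε
    have hupper : Tendsto (fun n => ENNReal.ofReal ((2:ℝ) ^ (Nat.log 2 n))⁻¹)
        atTop (nhds 0) := by
      have hlog : Tendsto (fun n => Nat.log 2 n) atTop atTop := by
        refine tendsto_atTop_atTop.mpr fun m => ⟨2 ^ m, fun n hn => ?_⟩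
        have h2 : 1 ≤ 2 ^ m := Nat.one_le_two_pow
        have hn1 : n ≠ 0 := by omega
        exact (Nat.le_log_iff_pow_le one_lt_two hn1).mpr hn
      have hreal : Tendsto (fun n : ℕ => ((2:ℝ) ^ (Nat.log 2 n))⁻¹) atTop (nhds 0) :=
        tendsto_inv_atTop_zero.comp
          ((tendsto_pow_atTop_atTop_of_one_lt (by norm_num : (1:ℝ) < 2)).comp hlog)
      simpa using (ENNReal.tendsto_ofReal hreal)
    refine tendsto_of_tendsto_of_tendsto_of_le_of_le' tendsto_const_nhds hupper
      (Eventually.of_forall fun n => zero_le) ?_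
    filter_upwards [eventually_ge_atTop 1] with n hn
    refine le_trans (measure_mono ?_) (hTsupp n hn)
    rintro x ⟨hx1, hx2⟩
    intro hTx
    rw [hformula n hn x, hTx, mul_zero] at hx2
    simp only [abs_zero] at hx2
    exact absurd hx2 (not_lt.mpr hε.le)
  · -- not a.e. convergence
    intro hae
    -- subsequence argument: convergence at x ∈ [0,1) forces g x = 0
    have hsub : ∀ x ∈ Set.Ico (0:ℝ) 1,
        Tendsto (fun n => F n x) atTop (nhds 0) → g x = 0 := by
      rintro x ⟨hx0, hx1⟩ hxt
      set s : ℕ → ℕ := fun k => 2 ^ k + ⌊x * 2 ^ k⌋₊ with hs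
      have hjk : ∀ k, ⌊x * 2 ^ k⌋₊ < 2 ^ k := by
        intro k
        have : x * 2 ^ k < 2 ^ k := by
          nlinarith [two_pow_pos k]
        rw [Nat.floor_lt (by positivity)]
        push_cast
        exact this
      have hT1 : ∀ k, T (s k) x = 1 := by
        intro k
        rw [hs, hT k _ (hjk k)]
        rw [Set.indicator_of_mem, Pi.one_apply]
        constructor
        · rw [← div_eq_mul_inv, div_le_iff₀ (two_pow_pos k)]
          exact Nat.floor_le (by positivity)
        · rw [← div_eq_mul_inv, le_div_iff₀ (two_pow_pos k)]
          have := Nat.lt_floor_add_one (x * 2 ^ k)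
          linarith
      have hs1 : ∀ k, 1 ≤ s k := fun k => le_trans (Nat.one_le_two_pow) (Nat.le_add_right _ _)
      have hstend : Tendsto s atTop atTop := by
        refine tendsto_atTop_mono (fun k => Nat.le_add_right (2 ^ k) _) ?_
        exact tendsto_pow_atTop_atTop_of_one_lt (by norm_num)
      have htend : Tendsto (fun k => F (s k) x) atTop (nhds 0) := hxt.comp hstend
      have hconst : ∀ k, F (s k) x = g x := by
        intro k
        rw [hformula (s k) (hs1 k) x, hT1 k, mul_one]
      rw [tendsto_congr hconst] at htend
      exact tendsto_nhds_unique tendsto_const_nhds htend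
    -- hence g vanishes a.e. on [0,1], and by continuity on (0,1)
    have hae' : ∀ᵐ x ∂(volume : Measure ℝ), x ∈ Set.Icc (0:ℝ) 1 →
        Tendsto (fun n => F n x) atTop (nhds 0) :=
      (ae_restrict_iff' measurableSet_Icc).mp hae
    have hgcont : Continuous g := by
      rw [hg]
      exact continuous_finset_sum _ fun j _ =>
        continuous_const.mul ((Real.continuous_exp).comp (continuous_const.mul continuous_id))
    have hAopen : IsOpen {x : ℝ | x ∈ Set.Ioo (0:ℝ) 1 ∧ g x ≠ 0} := by
      have : {x : ℝ | x ∈ Set.Ioo (0:ℝ) 1 ∧ g x ≠ 0} = Set.Ioo (0:ℝ) 1 ∩ g ⁻¹' {0}ᶜ := rfl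
      rw [this]
      exact isOpen_Ioo.inter (isOpen_compl_singleton.preimage hgcont)
    have hAnull : volume {x : ℝ | x ∈ Set.Ioo (0:ℝ) 1 ∧ g x ≠ 0} = 0 := by
      rw [measure_eq_zero_iff_ae_notMem]
      filter_upwards [hae'] with x hx
      rintro ⟨hx1, hx2⟩
      exact hx2 (hsub x ⟨hx1.1.le, hx1.2⟩ (hx ⟨hx1.1.le, hx1.2.le⟩))
    have hAempty : ∀ x ∈ Set.Ioo (0:ℝ) 1, g x = 0 := by
      intro x hx
      by_contra hgx
      have hpos : 0 < volume {x : ℝ | x ∈ Set.Ioo (0:ℝ) 1 ∧ g x ≠ 0} :=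
        hAopen.measure_pos volume ⟨x, hx, hgx⟩
      rw [hAnull] at hpos
      exact lt_irrefl 0 hpos
    -- g is analytic, hence vanishes identically on ℝ
    have hganal : AnalyticOnNhd ℝ g Set.univ := by
      rw [hg]
      exact Finset.analyticOnNhd_fun_sum _ fun j _ =>
        (analyticOnNhd_const.mul ((analyticOnNhd_rexp).comp
          (analyticOnNhd_const.mul analyticOnNhd_id) (Set.mapsTo_univ _ _)))
    have hgzero : ∀ x : ℝ, g x = 0 := by
      have hfreq : ∃ᶠ z in nhdsWithin (1/2 : ℝ) {(1/2 : ℝ)}ᶜ, g z = 0 := by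
        refine Filter.Eventually.frequently ?_
        have hmem : Set.Ioo (0:ℝ) 1 ∈ nhds (1/2 : ℝ) :=
          isOpen_Ioo.mem_nhds (by norm_num)
        exact eventually_nhdsWithin_of_eventually_nhds
          (Filter.eventually_of_mem hmem fun z hz => hAempty z hz)
      have := hganal.eqOn_zero_of_preconnected_of_frequently_eq_zero
        isPreconnected_univ (Set.mem_univ (1/2 : ℝ)) hfreq
      intro x
      exact this (Set.mem_univ x)
    -- linear independence: the exponents are pairwise distinct
    have hlinind : LinearIndependent ℚ (fun i : Fin N => c i) := by
      have : (fun i : Fin N => c i) =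
          (fun h : H => (h : ℝ)) ∘ (fun i : Fin N => (⟨c i, hc i⟩ : H)) := rfl
      rw [this]
      exact hind.comp _ (fun a b hab => hcinj (congrArg Subtype.val hab))
    have hlaminj : ∀ a b : Fin N → ℕ,
        (∑ i, c i * (a i : ℝ)) = (∑ i, c i * (b i : ℝ)) → a = b := by
      intro a b hab
      have hsum : ∑ i ∈ Finset.univ, ((a i : ℚ) - (b i : ℚ)) • c i = 0 := by
        have : ∑ i ∈ Finset.univ, ((a i : ℚ) - (b i : ℚ)) • c i
            = ∑ i, (c i * (a i : ℝ) - c i * (b i : ℝ)) := by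
          refine Finset.sum_congr rfl fun i _ => ?_
          rw [Rat.smul_def]
          push_cast
          ring
        rw [this, Finset.sum_sub_distrib, hab, sub_self]
      have hcoef := linearIndependent_iff'.mp hlinind Finset.univ
        (fun i => (a i : ℚ) - (b i : ℚ)) hsum
      funext i
      have h0 : (a i : ℚ) - (b i : ℚ) = 0 := hcoef i (Finset.mem_univ i)
      have : (a i : ℚ) = (b i : ℚ) := by linarith
      exact_mod_cast this
    -- the minimal exponent gives a contradiction
    obtain ⟨j₀, hj₀J, hj₀min⟩ :=
      J.exists_min_image (fun j => ∑ i, c i * (j i : ℝ)) hJne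
    have hlt : ∀ j ∈ J, j ≠ j₀ →
        0 < (∑ i, c i * (j i : ℝ)) - (∑ i, c i * (j₀ i : ℝ)) := by
      intro j hj hne
      have h1 := hj₀min j hj
      have h2 : (∑ i, c i * (j i : ℝ)) ≠ (∑ i, c i * (j₀ i : ℝ)) :=
        fun h => hne (hlaminj _ _ h)
      cases lt_or_eq_of_le h1 with
      | inl h => linarith
      | inr h => exact absurd h.symm h2
    set lam : (Fin N → ℕ) → ℝ := fun j => ∑ i, c i * (j i : ℝ) with hlam
    have hzero : ∀ x : ℝ, (∑ j ∈ J, α j * Real.exp ((lam j₀ - lam j) * x)) = 0 := by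
      intro x
      have : (∑ j ∈ J, α j * Real.exp ((lam j₀ - lam j) * x))
          = g x * Real.exp (lam j₀ * x) := by
        rw [hg, Finset.sum_mul]
        refine Finset.sum_congr rfl fun j hj => ?_
        rw [mul_assoc, ← Real.exp_add]
        congr 2
        ring
      rw [this, hgzero x, zero_mul]
    have htend2 : Tendsto (fun x : ℝ => ∑ j ∈ J, α j * Real.exp ((lam j₀ - lam j) * x))
        atTop (nhds (α j₀)) := by
      have hsum : Tendsto (fun x : ℝ => ∑ j ∈ J, α j * Real.exp ((lam j₀ - lam j) * x))
          atTop (nhds (∑ j ∈ J, if j = j₀ then α j₀ else 0)) := by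
        refine tendsto_finset_sum _ fun j hj => ?_
        by_cases hje : j = j₀
        · subst hje
          simp only [if_pos rfl, sub_self, zero_mul, Real.exp_zero, mul_one]
          exact tendsto_const_nhds
        · simp only [if_neg hje]
          have hd : 0 < lam j - lam j₀ := hlt j hj hje
          have hexp : Tendsto (fun x : ℝ => Real.exp ((lam j₀ - lam j) * x))
              atTop (nhds 0) := by
            have comp : Tendsto (fun x : ℝ => (lam j - lam j₀) * x) atTop atTop :=
              Tendsto.const_mul_atTop hd tendsto_id
            have := Real.tendsto_exp_neg_atTop_nhds_zero.comp comp
            refine this.congr fun x => ?_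
            simp only [Function.comp_apply]
            congr 1
            ring
          simpa using hexp.const_mul (α j)
      have : (∑ j ∈ J, if j = j₀ then α j₀ else 0) = α j₀ := by
        rw [Finset.sum_ite_eq' J j₀ (fun _ => α j₀), if_pos hj₀J]
      rwa [this] at hsum
    have : α j₀ = 0 := by
      have h0 : Tendsto (fun x : ℝ => ∑ j ∈ J, α j * Real.exp ((lam j₀ - lam j) * x))
          atTop (nhds 0) := by
        rw [tendsto_congr hzero]
        exact tendsto_const_nhds
      exact (tendsto_nhds_unique htend2 h0)
    exact hα j₀ hj₀J this
end

section
/- Let Z be a metrizable separable topological vector space over ℝ, γ an infinite cardinal, and A, B ⊆ Z such that A + B ⊆ A, A ∩ B = ∅, B contains a dense linear subspace minus zero (B is dense-lineable), and A contains a linear subspace of dimension γ minus zero (A is γ-lineable). Then A contains a dense linear subspace of dimension γ minus zero (A is γ-dense-lineable). -/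
open Pointwise TopologicalSpace

/-- Dense-lineability criterion: if A + B ⊆ A, A ∩ B = ∅, B is dense-lineable and
A is γ-lineable in a metrizable separable topological vector space, then A is
γ-dense-lineable. -/
theorem dense_lineability_criterion
    {Z : Type*} [AddCommGroup Z] [Module ℝ Z] [TopologicalSpace Z]
    [IsTopologicalAddGroup Z] [ContinuousSMul ℝ Z]
    [MetrizableSpace Z] [SeparableSpace Z]
    (γ : Cardinal) (hγ : Cardinal.aleph0 ≤ γ)
    (A B : Set Z)
    (hAB : A + B ⊆ A) (hdisj : A ∩ B = ∅)
    (hB : ∃ M : Submodule ℝ Z, Dense (M : Set Z) ∧ (M : Set Z) \ {0} ⊆ B)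
    (hA : ∃ M : Submodule ℝ Z, Module.rank ℝ M = γ ∧ (M : Set Z) \ {0} ⊆ A) :
    ∃ M : Submodule ℝ Z, Dense (M : Set Z) ∧ Module.rank ℝ M = γ ∧
      (M : Set Z) \ {0} ⊆ A := by
  classical
  obtain ⟨MB, hMBd, hMBB⟩ := hB
  obtain ⟨MA, hMAr, hMAA⟩ := hA
  -- MA and MB intersect trivially
  have htriv : ∀ x : Z, x ∈ MA → x ∈ MB → x = 0 := by
    intro x hxA hxB
    by_contra h
    have h1 : x ∈ A := hMAA ⟨hxA, h⟩
    have h2 : x ∈ B := hMBB ⟨hxB, h⟩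
    have : x ∈ A ∩ B := ⟨h1, h2⟩
    rw [hdisj] at this
    exact this
  letI : MetricSpace Z := TopologicalSpace.metrizableSpaceMetric Z
  haveI : SecondCountableTopology Z := UniformSpace.secondCountable_of_separable Z
  -- a countable dense (in Z) subset of MB
  obtain ⟨t, htMB, htc, htd⟩ := hMBd.exists_countable_dense_subset
  have htne : t.Nonempty := htd.nonempty
  obtain ⟨b0, hb0⟩ := Set.Countable.exists_eq_range htc htne
  set b : ℕ → Z := fun n => b0 (Nat.unpair n).1 with hb
  have hbMB : ∀ n, b n ∈ MB := fun n => htMB (hb0 ▸ ⟨(Nat.unpair n).1, rfl⟩)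
  have hbd : Dense (Set.range b) := by
    have hr : Set.range b = Set.range b0 := by
      apply Set.Subset.antisymm
      · rintro _ ⟨n, rfl⟩; exact ⟨(Nat.unpair n).1, rfl⟩
      · rintro _ ⟨m, rfl⟩
        exact ⟨Nat.pair m 0, by simp [hb]⟩
    rw [hr, ← hb0]; exact htd
  -- a basis of MA, reindexed by ℕ ⊕ ι
  set ι := Module.Basis.ofVectorSpaceIndex ℝ MA with hι
  set v : Module.Basis ι ℝ MA := Module.Basis.ofVectorSpace ℝ MA with hv
  have hιcard : Cardinal.mk ι = γ := by rw [v.mk_eq_rank'', hMAr]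
  have hcard : Cardinal.mk (ℕ ⊕ ι) = γ := by
    rw [Cardinal.mk_sum, hιcard]
    simp only [Cardinal.mk_nat, Cardinal.lift_aleph0, Cardinal.lift_uzero]
    exact Cardinal.add_eq_right hγ hγ
  have hequiv : Nonempty ((ℕ ⊕ ι) ≃ ι) := Cardinal.eq.mp (hcard.trans hιcard.symm)
  set w : Module.Basis (ℕ ⊕ ι) ℝ MA := v.reindex hequiv.some.symm with hw
  set a : (ℕ ⊕ ι) → Z := fun i => (w i : Z) with haa
  have ha_li : LinearIndependent ℝ a :=
    w.linearIndependent.map' MA.subtype MA.ker_subtype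
  have haMA : ∀ i, a i ∈ MA := fun i => (w i).2
  -- choose small perturbations
  have hed : ∀ n : ℕ, ∃ ε : ℝ, ε ≠ 0 ∧
      dist (b n + ε • a (Sum.inl n)) (b n) < 1 / (n + 1) := by
    intro n
    have hsm : Filter.Tendsto (fun ε : ℝ => ε • a (Sum.inl n)) (nhds 0)
        (nhds ((0 : ℝ) • a (Sum.inl n))) :=
      ((continuous_id.smul continuous_const).tendsto (0 : ℝ))
    rw [zero_smul] at hsm
    have hten : Filter.Tendsto (fun ε : ℝ => b n + ε • a (Sum.inl n)) (nhds 0)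
        (nhds (b n)) := by
      have := Filter.Tendsto.add (tendsto_const_nhds (x := b n)) hsm
      simpa using this
    have hpos : (0 : ℝ) < 1 / (n + 1) := by positivity
    have hball : Metric.ball (b n) (1 / (n + 1)) ∈ nhds (b n) :=
      Metric.ball_mem_nhds _ hpos
    have hev : ∀ᶠ ε : ℝ in nhds 0,
        dist (b n + ε • a (Sum.inl n)) (b n) < 1 / (n + 1) := by
      filter_upwards [hten hball] with ε hε using hε
    have hev' : ∀ᶠ ε : ℝ in nhdsWithin 0 {(0 : ℝ)}ᶜ,
        dist (b n + ε • a (Sum.inl n)) (b n) < 1 / (n + 1) :=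
      Filter.Eventually.filter_mono nhdsWithin_le_nhds hev
    obtain ⟨ε, hε1, hε2⟩ := (hev'.and self_mem_nhdsWithin).exists
    exact ⟨ε, hε2, hε1⟩
  choose ε hε0 hεd using hed
  -- the generating family
  set c : ℕ → Z := fun n => b n + ε n • a (Sum.inl n) with hc
  set f : (ℕ ⊕ ι) → Z := Sum.elim c (fun i => a (Sum.inr i)) with hf
  set M : Submodule ℝ Z := Submodule.span ℝ (Set.range f) with hM
  -- splitting f = bb + aa
  set d : (ℕ ⊕ ι) → ℝ := Sum.elim (fun n => ε n) (fun _ => 1) with hd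
  have hd0 : ∀ i, d i ≠ 0 := by rintro (n | i) <;> simp [hd, hε0]
  set bb : (ℕ ⊕ ι) → Z := Sum.elim b (fun _ => 0) with hbb
  set aa : (ℕ ⊕ ι) → Z := fun i => d i • a i with haa'
  have hfeq : ∀ i, f i = bb i + aa i := by
    rintro (n | i) <;> simp [hf, hbb, haa', hd, hc]
  have haa_li : LinearIndependent ℝ aa := by
    have := ha_li.units_smul (fun i => Units.mk0 (d i) (hd0 i))
    convert this using 1
    ext i; simp [haa', Units.smul_def]
  have hsplit : ∀ l : (ℕ ⊕ ι) →₀ ℝ, Finsupp.linearCombination ℝ f l =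
      Finsupp.linearCombination ℝ bb l + Finsupp.linearCombination ℝ aa l := by
    intro l
    rw [Finsupp.linearCombination_apply, Finsupp.linearCombination_apply,
      Finsupp.linearCombination_apply, ← Finsupp.sum_add]
    refine Finsupp.sum_congr fun i _ => ?_
    rw [hfeq i, smul_add]
  have hmemA : ∀ l : (ℕ ⊕ ι) →₀ ℝ, Finsupp.linearCombination ℝ aa l ∈ MA := by
    intro l
    have h1 : Finsupp.linearCombination ℝ aa l ∈ Submodule.span ℝ (Set.range aa) := by
      rw [← Finsupp.range_linearCombination]; exact ⟨l, rfl⟩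
    refine Submodule.span_le.mpr ?_ h1
    rintro _ ⟨i, rfl⟩
    exact MA.smul_mem _ (haMA i)
  have hmemB : ∀ l : (ℕ ⊕ ι) →₀ ℝ, Finsupp.linearCombination ℝ bb l ∈ MB := by
    intro l
    have h1 : Finsupp.linearCombination ℝ bb l ∈ Submodule.span ℝ (Set.range bb) := by
      rw [← Finsupp.range_linearCombination]; exact ⟨l, rfl⟩
    refine Submodule.span_le.mpr ?_ h1
    rintro _ ⟨i, rfl⟩
    rcases i with n | i
    · exact hbMB n
    · exact MB.zero_mem
  have hq0 : ∀ l : (ℕ ⊕ ι) →₀ ℝ, Finsupp.linearCombination ℝ aa l = 0 → l = 0 :=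
    fun l hl => linearIndependent_iff.mp haa_li l hl
  -- f is linearly independent
  have hf_li : LinearIndependent ℝ f := by
    rw [linearIndependent_iff]
    intro l hl
    rw [hsplit l] at hl
    have hmA := hmemA l
    have hmB := hmemB l
    have hqB : Finsupp.linearCombination ℝ aa l ∈ MB := by
      have heq : Finsupp.linearCombination ℝ aa l = -Finsupp.linearCombination ℝ bb l :=
        eq_neg_of_add_eq_zero_right hl
      rw [heq]; exact MB.neg_mem hmB
    exact hq0 l (htriv _ hmA hqB)
  refine ⟨M, ?_, ?_, ?_⟩
  · -- density
    rw [Metric.dense_iff]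
    intro x r hr
    obtain ⟨y, hy1, hy2⟩ := Metric.dense_iff.mp hbd x (r / 2) (by linarith)
    obtain ⟨m, rfl⟩ := hy2
    obtain ⟨k, hk⟩ := exists_nat_one_div_lt (ε := r / 2) (by linarith)
    set n : ℕ := Nat.pair (Nat.unpair m).1 k with hn
    have hbn : b n = b m := by simp [hb, hn]
    have hkn : (k : ℕ) ≤ n := Nat.right_le_pair _ _
    have h1n : (1 : ℝ) / (n + 1) ≤ 1 / (k + 1) := by
      apply one_div_le_one_div_of_le
      · positivity
      · exact_mod_cast Nat.succ_le_succ hkn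
    refine ⟨c n, ?_, ?_⟩
    · have hdist : dist x (c n) ≤ dist x (b n) + dist (b n) (c n) := dist_triangle _ _ _
      have h2 : dist (b n) (c n) < 1 / (n + 1) := by
        rw [dist_comm]; exact hεd n
      have h3 : dist x (b n) < r / 2 := by rw [hbn]; exact Metric.mem_ball'.mp hy1
      have : dist x (c n) < r := by
        calc dist x (c n) ≤ dist x (b n) + dist (b n) (c n) := hdist
          _ < r / 2 + 1 / (n + 1) := by linarith
          _ ≤ r / 2 + 1 / (k + 1) := by linarith
          _ < r / 2 + r / 2 := by linarith
          _ = r := by ring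
      exact Metric.mem_ball'.mp this
    · exact Submodule.subset_span ⟨Sum.inl n, rfl⟩
  · -- rank
    rw [hM, rank_span hf_li, Cardinal.mk_range_eq f hf_li.injective, hcard]
  · -- M \ {0} ⊆ A
    rintro x ⟨hxM, hx0⟩
    have hx0' : x ≠ 0 := hx0
    have : x ∈ LinearMap.range (Finsupp.linearCombination ℝ f) := by
      rw [Finsupp.range_linearCombination]; exact hxM
    obtain ⟨l, hl⟩ := this
    rw [hsplit l] at hl
    set p := Finsupp.linearCombination ℝ bb l with hp
    set q := Finsupp.linearCombination ℝ aa l with hq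
    have hqMA : q ∈ MA := hmemA l
    have hpMB : p ∈ MB := hmemB l
    by_cases hqz : q = 0
    · exfalso
      have hlz : l = 0 := hq0 l hqz
      have hp0 : p = 0 := by rw [hp, hlz]; simp
      exact hx0' (by rw [← hl, hp0, hqz, add_zero])
    · have hqA : q ∈ A := hMAA ⟨hqMA, hqz⟩
      by_cases hpz : p = 0
      · rw [← hl, hpz, zero_add]; exact hqA
      · have hpB : p ∈ B := hMBB ⟨hpMB, hpz⟩
        have : q + p ∈ A + B := Set.add_mem_add hqA hpB
        have hx : x = q + p := by rw [← hl, add_comm]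
        rw [hx]
        exact hAB this
end
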